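/- For n ≥ 1, the number of sequences (a_1, ..., a_n) of nonnegative integers whose nondecreasing rearrangement c_1 ≤ ... ≤ c_n satisfies c_1 = 1 and c_i < i for all 2 ≤ i ≤ n is (n-1)^(n-1). -/

import Mathlib

/-- The nondecreasing rearrangement of a sequence. -/
def sortedSeq {n : ℕ} (a : Fin n → ℕ) : Fin n → ℕ := a ∘ Tuple.sort a

section Aux
open Finset

/-- For a monotone sequence, `c i ≤ t` iff at least `i+1` entries are `≤ t`. -/
lemma sorted_le_iff {n : ℕ} {c : Fin n → ℕ} (hc : Monotone c) (i : Fin n) (t : ℕ) :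
    c i ≤ t ↔ i.val + 1 ≤ #(univ.filter fun j => c j ≤ t) := by
  constructor
  · intro h
    have hsub : Finset.Iic i ⊆ univ.filter fun j => c j ≤ t := by
      intro j hj
      simp only [mem_filter, mem_univ, true_and]
      exact le_trans (hc (mem_Iic.mp hj)) h
    calc i.val + 1 = #(Finset.Iic i) := (Fin.card_Iic i).symm
      _ ≤ _ := card_le_card hsub
  · intro h
    by_contra hlt
    push_neg at hlt
    have hsub : (univ.filter fun j => c j ≤ t) ⊆ Finset.Iio i := by
      intro j hj
      simp only [mem_filter, mem_univ, true_and] at hj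
      rw [mem_Iio]
      by_contra hij
      exact absurd (le_trans (hc (not_lt.mp hij)) hj) (not_le.mpr hlt)
    have := card_le_card hsub
    rw [Fin.card_Iio] at this
    omega

/-- Filtering a permuted sequence gives the same count. -/
lemma card_filter_perm {n : ℕ} (σ : Equiv.Perm (Fin n)) (p : Fin n → Prop) [DecidablePred p] :
    #(univ.filter fun i => p (σ i)) = #(univ.filter fun i => p i) := by
  apply Finset.card_bij (fun i _ => σ i)
  · intro i hi; simp only [mem_filter, mem_univ, true_and] at hi ⊢; exact hi
  · intro i _ j _ h; exact σ.injective h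
  · intro j hj
    refine ⟨σ.symm j, ?_, by simp⟩
    simp only [mem_filter, mem_univ, true_and, Equiv.apply_symm_apply] at hj ⊢
    exact hj

/-- Counting function: `NN b k` = number of entries with value `< k`. -/
def NN {m : ℕ} (b : Fin (m+1) → ZMod m) (k : ℕ) : ℕ :=
  #(univ.filter fun i => (b i).val < k)

/-- The height function extended periodically (with slope `+1` per period). -/
def gg (m : ℕ) (N : ℕ → ℕ) (x : ℕ) : ℤ :=
  (x / m : ℕ) * (m + 1) + N (x % m) - x

lemma gg_add_m (m : ℕ) (hm : 0 < m) (N : ℕ → ℕ) (x : ℕ) :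
    gg m N (x + m) = gg m N x + 1 := by
  unfold gg
  rw [Nat.add_div_right _ hm, Nat.add_mod_right]
  push_cast
  ring

lemma NN_zero {m : ℕ} (b : Fin (m+1) → ZMod m) : NN b 0 = 0 := by
  simp [NN]

lemma NN_top {m : ℕ} (hm : 0 < m) (b : Fin (m+1) → ZMod m) : NN b m = m + 1 := by
  haveI : NeZero m := ⟨hm.ne'⟩
  unfold NN
  rw [filter_true_of_mem (fun i _ => ZMod.val_lt (b i)), card_univ, Fintype.card_fin]

lemma gg_eval {m : ℕ} (hm : 0 < m) (b : Fin (m+1) → ZMod m) (x : ℕ) (hx : x ≤ m) :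
    gg m (NN b) x = (NN b x : ℤ) - x := by
  rcases eq_or_lt_of_le hx with h | h
  · subst h
    unfold gg
    rw [Nat.div_self hm, Nat.mod_self, NN_zero, NN_top hm]
    push_cast; ring
  · unfold gg
    rw [Nat.div_eq_of_lt h, Nat.mod_eq_of_lt h]
    push_cast; ring

/-- Pointwise membership in a circular interval. -/
lemma val_sub_lt_iff {m : ℕ} (hm : 0 < m) (x s : ZMod m) (k : ℕ) (hk : k ≤ m) :
    (x - s).val < k ↔
      (if s.val + k ≤ m then s.val ≤ x.val ∧ x.val < s.val + k
       else s.val ≤ x.val ∨ x.val < s.val + k - m) := by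
  haveI : NeZero m := ⟨hm.ne'⟩
  have hv : x.val < m := ZMod.val_lt x
  have hs : s.val < m := ZMod.val_lt s
  have key : x - s = ((x.val + (m - s.val) : ℕ) : ZMod m) := by
    push_cast [Nat.cast_sub hs.le]
    rw [ZMod.natCast_self, ZMod.natCast_val, ZMod.natCast_val]
    simp [ZMod.cast_id]
    ring
  rw [key, ZMod.val_natCast]
  rcases le_or_gt s.val x.val with h1 | h1
  · rw [show x.val + (m - s.val) = m + (x.val - s.val) by omega, Nat.add_mod_left,
      Nat.mod_eq_of_lt (by omega)]
    split <;> omega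
  · rw [Nat.mod_eq_of_lt (by omega)]
    split <;> omega

/-- Splitting a count at a threshold. -/
lemma NN_split {m : ℕ} (b : Fin (m+1) → ZMod m) (r s : ℕ) (hrs : r ≤ s) :
    NN b s = NN b r + #(univ.filter fun i => r ≤ (b i).val ∧ (b i).val < s) := by
  unfold NN
  rw [← card_union_of_disjoint]
  · congr 1
    rw [← filter_or]
    apply filter_congr
    intro i _
    constructor
    · intro h; omega
    · intro h; omega
  · rw [disjoint_left]
    intro i hi hi2
    simp only [mem_filter, mem_univ, true_and] at hi hi2
    omega

lemma count_eq {m : ℕ} (hm : 0 < m) (b : Fin (m+1) → ZMod m) (s : ZMod m) (k : ℕ)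
    (hk : k ≤ m) :
    (#(univ.filter fun i => (b i - s).val < k) : ℤ) =
      gg m (NN b) (s.val + k) - gg m (NN b) s.val + k := by
  classical
  haveI : NeZero m := ⟨hm.ne'⟩
  have hs : s.val < m := ZMod.val_lt s
  by_cases hc : s.val + k ≤ m
  · have hfe : (univ.filter fun i => (b i - s).val < k) =
        univ.filter fun i => s.val ≤ (b i).val ∧ (b i).val < s.val + k := by
      apply filter_congr
      intro i _
      rw [val_sub_lt_iff hm _ _ k hk, if_pos hc]
    rw [hfe, gg_eval hm b _ hc, gg_eval hm b _ (by omega)]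
    have := NN_split b s.val (s.val + k) (by omega)
    omega
  · push_neg at hc
    set r := s.val + k - m with hr
    have hfe : (univ.filter fun i => (b i - s).val < k) =
        univ.filter fun i => s.val ≤ (b i).val ∨ (b i).val < r := by
      apply filter_congr
      intro i _
      rw [val_sub_lt_iff hm _ _ k hk, if_neg (by omega)]
    have htot := card_filter_add_card_filter_not
      (s := (univ : Finset (Fin (m+1)))) (p := fun i => s.val ≤ (b i).val ∨ (b i).val < r)
    have hneg : (univ.filter fun i => ¬(s.val ≤ (b i).val ∨ (b i).val < r)) =
        univ.filter fun i => r ≤ (b i).val ∧ (b i).val < s.val := by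
      apply filter_congr
      intro i _
      constructor
      · intro h; omega
      · intro h; omega
    rw [hneg] at htot
    rw [card_univ, Fintype.card_fin] at htot
    have hsplit := NN_split b r s.val (by omega)
    have hgk : gg m (NN b) (s.val + k) = (NN b r : ℤ) - r + 1 := by
      rw [show s.val + k = r + m by omega, gg_add_m m hm, gg_eval hm b r (by omega)]
    rw [hfe, hgk, gg_eval hm b s.val (by omega)]
    omega

/-- The spherical parking condition for a `ZMod m`-valued sequence. -/
def Cond (m : ℕ) (b : Fin (m+1) → ZMod m) : Prop :=
  ∀ k < m, k + 2 ≤ #(univ.filter fun i => (b i).val ≤ k)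

lemma cond_iff {m : ℕ} (hm : 0 < m) (b : Fin (m+1) → ZMod m) (s : ZMod m) :
    Cond m (fun i => b i - s) ↔
      ∀ L, 1 ≤ L → L ≤ m → gg m (NN b) s.val + 1 ≤ gg m (NN b) (s.val + L) := by
  have main : ∀ k, k < m →
      ((k + 2 ≤ #(univ.filter fun i => (b i - s).val ≤ k)) ↔
        gg m (NN b) s.val + 1 ≤ gg m (NN b) (s.val + (k + 1))) := by
    intro k hk
    have hce := count_eq hm b s (k+1) (by omega)
    have hfe : (univ.filter fun i => (b i - s).val ≤ k) =
        univ.filter fun i => (b i - s).val < k + 1 := by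
      apply filter_congr; intro i _; simp [Nat.lt_succ_iff]
    rw [hfe]
    omega
  constructor
  · intro H L h1 h2
    have := (main (L-1) (by omega)).mp (H (L-1) (by omega))
    rwa [show L - 1 + 1 = L by omega] at this
  · intro H k hk
    exact (main k hk).mpr (H (k+1) (by omega) (by omega))

/-- Cycle lemma: exactly one cyclic shift satisfies the condition. -/
lemma exists_unique_shift {m : ℕ} (hm : 0 < m) (b : Fin (m+1) → ZMod m) :
    ∃! s : ZMod m, Cond m (fun i => b i - s) := by
  classical
  haveI : NeZero m := ⟨hm.ne'⟩
  have hgadd : ∀ x, gg m (NN b) (x + m) = gg m (NN b) x + 1 := gg_add_m m hm (NN b)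
  set T : Finset ℕ :=
    (range m).filter (fun x => ∀ y ∈ range m, gg m (NN b) x ≤ gg m (NN b) y) with hT
  have hTne : T.Nonempty := by
    obtain ⟨x, hx, hx2⟩ := Finset.exists_min_image (range m) (gg m (NN b)) ⟨0, mem_range.mpr hm⟩
    exact ⟨x, mem_filter.mpr ⟨hx, hx2⟩⟩
  set s0 := T.max' hTne with hs0
  have hs0T : s0 ∈ T := T.max'_mem hTne
  have hs0r : s0 < m := mem_range.mp (mem_filter.mp hs0T).1
  have hs0min : ∀ y ∈ range m, gg m (NN b) s0 ≤ gg m (NN b) y := (mem_filter.mp hs0T).2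
  have hQ : ∀ L, 1 ≤ L → L ≤ m → gg m (NN b) s0 + 1 ≤ gg m (NN b) (s0 + L) := by
    intro L h1 h2
    by_cases hc : s0 + L < m
    · have hge : gg m (NN b) s0 ≤ gg m (NN b) (s0 + L) := hs0min _ (mem_range.mpr hc)
      rcases eq_or_lt_of_le hge with he | hlt
      · exfalso
        have hmem : s0 + L ∈ T := by
          refine mem_filter.mpr ⟨mem_range.mpr hc, ?_⟩
          intro y hy
          rw [← he]
          exact hs0min y hy
        have := T.le_max' _ hmem
        omega
      · omega
    · push_neg at hc
      have heq := hgadd (s0 + L - m)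
      rw [show s0 + L - m + m = s0 + L by omega] at heq
      rw [heq]
      have := hs0min (s0 + L - m) (mem_range.mpr (by omega))
      omega
  have huniq : ∀ u u' : ℕ, u < m → u' < m → u < u' →
      (∀ L, 1 ≤ L → L ≤ m → gg m (NN b) u + 1 ≤ gg m (NN b) (u + L)) →
      (∀ L, 1 ≤ L → L ≤ m → gg m (NN b) u' + 1 ≤ gg m (NN b) (u' + L)) → False := by
    intro u u' hu hu' hlt H H'
    have h1 := H (u' - u) (by omega) (by omega)
    rw [show u + (u' - u) = u' by omega] at h1
    have h2 := H' (u + m - u') (by omega) (by omega)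
    rw [show u' + (u + m - u') = u + m by omega] at h2
    have h3 := hgadd u
    omega
  refine ⟨(s0 : ZMod m), ?_, ?_⟩
  · show Cond m fun i => b i - (s0 : ZMod m)
    rw [cond_iff hm]
    rwa [ZMod.val_natCast, Nat.mod_eq_of_lt hs0r]
  · intro s' hs'p
    have hs' : Cond m fun i => b i - s' := hs'p
    rw [cond_iff hm] at hs'
    have hval : s'.val = s0 := by
      have hs'lt : s'.val < m := ZMod.val_lt s'
      rcases lt_trichotomy s'.val s0 with h | h | h
      · exact absurd (huniq s'.val s0 hs'lt hs0r h hs' hQ) not_false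
      · exact h
      · exact absurd (huniq s0 s'.val hs0r hs'lt h hQ hs') not_false
    rw [← hval, ZMod.natCast_val, ZMod.cast_id]

lemma card_Q {m : ℕ} (hm : 0 < m) :
    Nat.card {b : Fin (m+1) → ZMod m // Cond m b} = m ^ m := by
  classical
  haveI : NeZero m := ⟨hm.ne'⟩
  set e : {b : Fin (m+1) → ZMod m // Cond m b} × ZMod m → (Fin (m+1) → ZMod m) :=
    fun p => fun i => p.1.1 i + p.2 with he
  have hbij : Function.Bijective e := by
    constructor
    · rintro ⟨⟨b1, h1⟩, t1⟩ ⟨⟨b2, h2⟩, t2⟩ h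
      have hfun : ∀ i, b1 i + t1 = b2 i + t2 := fun i => congrFun h i
      obtain ⟨s, -, huniq⟩ := exists_unique_shift hm (fun i => b1 i + t1)
      have e1 : Cond m fun i => (b1 i + t1) - t1 := by
        simpa using h1
      have e2 : Cond m fun i => (b1 i + t1) - t2 := by
        have : (fun i => (b1 i + t1) - t2) = b2 := by
          funext i; rw [hfun i]; ring
        rw [this]; exact h2
      have ht : t1 = t2 := by
        have u1 := huniq t1 e1
        have u2 := huniq t2 e2
        rw [u1, u2]
      have hb : b1 = b2 := by
        funext i
        have := hfun i
        rw [ht] at this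
        exact add_right_cancel this
      simp [hb, ht]
    · intro c
      obtain ⟨s, hs, -⟩ := exists_unique_shift hm c
      exact ⟨⟨⟨fun i => c i - s, hs⟩, s⟩, funext fun i => by simp [he]⟩
  have hcard := Nat.card_eq_of_bijective e hbij
  rw [Nat.card_prod, Nat.card_eq_fintype_card (α := ZMod m), ZMod.card,
    Nat.card_fun, Nat.card_eq_fintype_card (α := ZMod m), ZMod.card,
    Nat.card_eq_fintype_card (α := Fin (m+1)), Fintype.card_fin] at hcard
  have : m ^ (m + 1) = m ^ m * m := by ring
  rw [this] at hcard
  exact Nat.eq_of_mul_eq_mul_right hm hcard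

lemma mem_S_iff {m : ℕ} (hm : 0 < m) (h0 : 0 < m + 1) (a : Fin (m+1) → ℕ) :
    (sortedSeq a ⟨0, h0⟩ = 1 ∧ ∀ i : Fin (m+1), 1 ≤ i.val → sortedSeq a i < i.val + 1) ↔
      ((∀ i, 1 ≤ a i ∧ a i ≤ m) ∧
        ∀ k < m, k + 2 ≤ #(univ.filter fun i => a i ≤ k + 1)) := by
  classical
  have hmono : Monotone (sortedSeq a) := Tuple.monotone_sort a
  have hcount : ∀ t, #(univ.filter fun j => sortedSeq a j ≤ t) =
      #(univ.filter fun i => a i ≤ t) :=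
    fun t => card_filter_perm (Tuple.sort a) (fun i => a i ≤ t)
  have hsc : ∀ (i : Fin (m+1)) (t : ℕ),
      sortedSeq a i ≤ t ↔ i.val + 1 ≤ #(univ.filter fun j => a j ≤ t) :=
    fun i t => (sorted_le_iff hmono i t).trans (by rw [hcount])
  have h0le : ∀ j : Fin (m+1), (⟨0, h0⟩ : Fin (m+1)) ≤ j := fun j => by
    simp [Fin.le_def]
  constructor
  · rintro ⟨hfirst, hrest⟩
    have hge1 : ∀ j, 1 ≤ sortedSeq a j := by
      intro j
      have := hmono (h0le j)
      rw [hfirst] at this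
      exact this
    have hlem : ∀ j : Fin (m+1), sortedSeq a j ≤ m := by
      intro j
      by_cases hj : 1 ≤ j.val
      · have h1 := hrest j hj
        have h2 := j.isLt
        omega
      · have hj0 : j.val = 0 := by omega
        have hj : j = ⟨0, h0⟩ := Fin.ext (by rw [hj0])
        rw [hj, hfirst]
        omega
    constructor
    · intro i
      have hai : a i = sortedSeq a ((Tuple.sort a)⁻¹ i) := by
        simp [sortedSeq]
      rw [hai]
      exact ⟨hge1 _, hlem _⟩
    · intro k hk
      have hi : sortedSeq a ⟨k+1, by omega⟩ ≤ k + 1 := by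
        have := hrest ⟨k+1, by omega⟩ (by simp)
        simp only at this
        omega
      have := (hsc ⟨k+1, by omega⟩ (k+1)).mp hi
      exact this
  · rintro ⟨hb, hcnt⟩
    have hfirst : sortedSeq a ⟨0, h0⟩ = 1 := by
      have hge : 1 ≤ sortedSeq a ⟨0, h0⟩ := by
        have : sortedSeq a ⟨0, h0⟩ = a (Tuple.sort a ⟨0, h0⟩) := rfl
        rw [this]
        exact (hb _).1
      have hle : sortedSeq a ⟨0, h0⟩ ≤ 1 := by
        rw [hsc]
        have := hcnt 0 hm
        simp only [Nat.zero_add] at this ⊢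
        omega
      omega
    refine ⟨hfirst, ?_⟩
    intro i hi
    have hkm : i.val - 1 < m := by
      have := i.isLt
      omega
    have hc := hcnt (i.val - 1) hkm
    rw [show i.val - 1 + 1 = i.val by omega] at hc
    have hle : sortedSeq a i ≤ i.val := by
      rw [hsc]
      omega
    omega

theorem stmt1 (n : ℕ) (hn : 1 ≤ n) :
    Set.ncard {a : Fin n → ℕ |
        sortedSeq a ⟨0, hn⟩ = 1 ∧ ∀ i : Fin n, 1 ≤ i.val → sortedSeq a i < i.val + 1} =
      (n - 1) ^ (n - 1) := by
  classical
  cases n with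
  | zero => omega
  | succ m =>
    by_cases hm : 0 < m
    case neg =>
      -- n = 1
      have hm0 : m = 0 := by omega
      subst hm0
      have hset : {a : Fin 1 → ℕ |
          sortedSeq a ⟨0, hn⟩ = 1 ∧ ∀ i : Fin 1, 1 ≤ i.val → sortedSeq a i < i.val + 1} =
          {fun _ => 1} := by
        ext a
        simp only [Set.mem_setOf_eq, Set.mem_singleton_iff]
        constructor
        · rintro ⟨h1, -⟩
          funext i
          have hi : i = Tuple.sort a ⟨0, hn⟩ := Subsingleton.elim _ _
          rw [hi]
          exact h1
        · rintro rfl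
          refine ⟨rfl, ?_⟩
          intro i hi
          have := i.isLt
          omega
      rw [hset, Set.ncard_singleton]
      simp
    case pos =>
      haveI : NeZero m := ⟨hm.ne'⟩
      have hset : {a : Fin (m+1) → ℕ |
          sortedSeq a ⟨0, hn⟩ = 1 ∧ ∀ i : Fin (m+1), 1 ≤ i.val → sortedSeq a i < i.val + 1} =
          {a : Fin (m+1) → ℕ | (∀ i, 1 ≤ a i ∧ a i ≤ m) ∧
            ∀ k < m, k + 2 ≤ #(univ.filter fun i => a i ≤ k + 1)} :=
        Set.ext fun a => mem_S_iff hm hn a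
      rw [hset, ← Nat.card_coe_set_eq]
      have hcongr : Nat.card ↑{a : Fin (m+1) → ℕ | (∀ i, 1 ≤ a i ∧ a i ≤ m) ∧
            ∀ k < m, k + 2 ≤ #(univ.filter fun i => a i ≤ k + 1)} =
          Nat.card {b : Fin (m+1) → ZMod m // Cond m b} := by
        apply Nat.card_congr
        refine ⟨fun p => ⟨fun i => ((p.1 i - 1 : ℕ) : ZMod m), ?_⟩,
                fun q => ⟨fun i => (q.1 i).val + 1, ?_⟩, ?_, ?_⟩
        · -- Cond holds for the image
          obtain ⟨hab, hacnt⟩ := p.2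
          intro k hk
          have hfe : (univ.filter fun i => ((p.1 i - 1 : ℕ) : ZMod m).val ≤ k) =
              univ.filter fun i => p.1 i ≤ k + 1 := by
            apply filter_congr
            intro i _
            rw [ZMod.val_natCast_of_lt (by have := hab i; omega)]
            have := hab i
            constructor
            · intro h; omega
            · intro h; omega
          rw [hfe]
          exact hacnt k hk
        · -- membership for the preimage
          have hq := q.2
          refine ⟨fun i => ?_, ?_⟩
          · show 1 ≤ (q.1 i).val + 1 ∧ (q.1 i).val + 1 ≤ m
            have := ZMod.val_lt (q.1 i)
            omega
          intro k hk
          beta_reduce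
          have hfe : (univ.filter fun i => (q.1 i).val + 1 ≤ k + 1) =
              univ.filter fun i => (q.1 i).val ≤ k := by
            apply filter_congr
            intro i _
            omega
          rw [hfe]
          exact hq k hk
        · rintro ⟨a, ha⟩
          apply Subtype.ext
          funext i
          simp only
          rw [ZMod.val_natCast_of_lt (by have := ha.1 i; omega)]
          have := ha.1 i
          omega
        · rintro ⟨b, hb⟩
          apply Subtype.ext
          funext i
          simp only [Nat.add_sub_cancel]
          rw [ZMod.natCast_val, ZMod.cast_id]
      rw [hcongr, card_Q hm]
      simp

end Aux
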